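/- If X is a connected Tychonoff space, then every cut point of X is a cut point of the Stone–Čech compactification βX. -/
import Mathlib

open Set

/-- Key lemma: if `U, V` are disjoint open sets with `U ∪ V = {x}ᶜ`, then no point of `βX`
other than `ι x` lies in the closure of both `ι '' U` and `ι '' V`. -/
lemma aux_stmt_6 {X : Type*} [TopologicalSpace X] [T35Space X] (x : X) (U V : Set X)
    (hU : IsOpen U) (hV : IsOpen V) (hd : U ∩ V = ∅) (hun : U ∪ V = ({x}ᶜ : Set X))
    (p : StoneCech X) (hp : p ≠ stoneCechUnit x) :
    p ∉ closure (stoneCechUnit '' U) ∩ closure (stoneCechUnit '' V) := by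
  classical
  rintro ⟨hpU, hpV⟩
  obtain ⟨f, hf0, hf1, hficc⟩ :=
    exists_continuous_zero_one_of_isClosed (isClosed_singleton (x := p))
      (isClosed_singleton (x := stoneCechUnit x)) (by simpa using hp)
  set ι : X → StoneCech X := stoneCechUnit with hι
  -- the auxiliary real-valued function on X
  set g₀ : X → ℝ := fun y => if y ∈ U then min (f (ι y)) (1/3) else 1/3 with hg₀
  have hg₀cont : Continuous g₀ := by
    rw [continuous_iff_continuousAt]
    intro y
    by_cases hyU : y ∈ U
    · have h1 : ContinuousAt (fun y => min (f (ι y)) (1/3)) y :=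
        ((f.continuous.comp continuous_stoneCechUnit).min continuous_const).continuousAt
      apply h1.congr
      filter_upwards [hU.mem_nhds hyU] with z hz
      simp [hg₀, hz]
    by_cases hyV : y ∈ V
    · have h1 : ContinuousAt (fun _ : X => (1/3 : ℝ)) y := continuousAt_const
      apply h1.congr
      filter_upwards [hV.mem_nhds hyV] with z hz
      have hzU : z ∉ U := fun h => absurd (Set.mem_inter h hz) (by simp [hd])
      simp [hg₀, hzU]
    · -- y = x
      have hyx : y = x := by
        by_contra h
        have : y ∈ U ∪ V := hun ▸ (by simpa using h)
        rcases this with h1 | h1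
        · exact hyU h1
        · exact hyV h1
      have hN : IsOpen ((fun z => f (ι z)) ⁻¹' Ioi (1/3 : ℝ)) :=
        (f.continuous.comp continuous_stoneCechUnit).isOpen_preimage _ isOpen_Ioi
      have hyN : y ∈ (fun z => f (ι z)) ⁻¹' Ioi (1/3 : ℝ) := by
        have : f (ι y) = 1 := by
          subst hyx; exact hf1 rfl
        simp only [Set.mem_preimage, Set.mem_Ioi, this]
        norm_num
      have h1 : ContinuousAt (fun _ : X => (1/3 : ℝ)) y := continuousAt_const
      apply h1.congr
      filter_upwards [hN.mem_nhds hyN] with z hz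
      by_cases hzU : z ∈ U
      · have : (1/3 : ℝ) ≤ f (ι z) := le_of_lt hz
        simp only [hg₀, if_pos hzU]
        rw [min_eq_right this]
      · simp [hg₀, hzU]
  have hg₀mem : ∀ y, g₀ y ∈ Icc (0:ℝ) 1 := by
    intro y
    by_cases hyU : y ∈ U
    · simp only [hg₀, if_pos hyU]
      constructor
      · exact le_min (hficc (ι y)).1 (by norm_num)
      · exact le_trans (min_le_right _ _) (by norm_num)
    · simp only [hg₀, if_neg hyU]
      norm_num
  set g : X → Icc (0:ℝ) 1 := fun y => ⟨g₀ y, hg₀mem y⟩ with hg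
  have hgc : Continuous g := hg₀cont.subtype_mk _
  set G := stoneCechExtend hgc with hG
  have hGext : ∀ y : X, G (ι y) = g y := fun y => congrFun (stoneCechExtend_extends hgc) y
  have hGc : Continuous fun z => ((G z : ℝ)) :=
    continuous_subtype_val.comp (continuous_stoneCechExtend hgc)
  -- from the V side: G p = 1/3
  have h13 : ((G p : ℝ)) = 1/3 := by
    have hclosed : IsClosed {z : StoneCech X | ((G z : ℝ)) = 1/3} :=
      isClosed_eq hGc continuous_const
    have hsub : ι '' V ⊆ {z : StoneCech X | ((G z : ℝ)) = 1/3} := by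
      rintro _ ⟨y, hyV, rfl⟩
      have hyU : y ∉ U := fun h => absurd (Set.mem_inter h hyV) (by simp [hd])
      simp [hGext, hg, hg₀, hyU]
    exact hclosed.closure_subset_iff.mpr hsub hpV
  -- from the U side: G p ≤ 1/4
  have h14 : ((G p : ℝ)) ≤ 1/4 := by
    have hO : IsOpen (f ⁻¹' Iio (1/4 : ℝ)) := f.continuous.isOpen_preimage _ isOpen_Iio
    have hpO : p ∈ f ⁻¹' Iio (1/4 : ℝ) := by
      have : f p = 0 := hf0 rfl
      simp only [Set.mem_preimage, Set.mem_Iio, this]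
      norm_num
    have hmem : p ∈ closure (f ⁻¹' Iio (1/4 : ℝ) ∩ ι '' U) :=
      hO.inter_closure ⟨hpO, hpU⟩
    have hclosed : IsClosed {z : StoneCech X | ((G z : ℝ)) ≤ 1/4} :=
      isClosed_le hGc continuous_const
    have hsub : f ⁻¹' Iio (1/4 : ℝ) ∩ ι '' U ⊆ {z : StoneCech X | ((G z : ℝ)) ≤ 1/4} := by
      rintro _ ⟨hzO, ⟨y, hyU, rfl⟩⟩
      have : g₀ y = min (f (ι y)) (1/3) := by simp [hg₀, hyU]
      have hlt : f (ι y) < 1/4 := hzO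
      have : ((G (ι y) : ℝ)) = min (f (ι y)) (1/3) := by rw [hGext]; simpa [hg]
      simp only [Set.mem_setOf_eq]
      rw [this]
      exact le_trans (min_le_left _ _) (le_of_lt hlt)
    exact hclosed.closure_subset_iff.mpr hsub hmem
  linarith

/-- If `X` is a connected Tychonoff space, then every cut point of `X` is a cut point of
its Stone–Čech compactification `βX`. -/
theorem stmt_6 {X : Type*} [TopologicalSpace X] [T35Space X] [ConnectedSpace X]
    (x : X) (hcut : ¬ IsPreconnected ({x}ᶜ : Set X)) :
    ¬ IsPreconnected ({stoneCechUnit x}ᶜ : Set (StoneCech X)) := by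
  rw [IsPreconnected] at hcut
  push_neg at hcut
  obtain ⟨u, v, hu, hv, hsub, hneu, hnev, hdisj⟩ := hcut
  set ι : X → StoneCech X := stoneCechUnit with hι
  set U : Set X := {x}ᶜ ∩ u with hUdef
  set V : Set X := {x}ᶜ ∩ v with hVdef
  have hUopen : IsOpen U := (isOpen_compl_singleton).inter hu
  have hVopen : IsOpen V := (isOpen_compl_singleton).inter hv
  have hUV : U ∩ V = ∅ := by
    rw [Set.eq_empty_iff_forall_notMem]
    rintro y ⟨⟨hy1, hy2⟩, ⟨hy3, hy4⟩⟩
    exact Set.eq_empty_iff_forall_notMem.mp hdisj y ⟨hy1, hy2, hy4⟩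
  have hUVun : U ∪ V = ({x}ᶜ : Set X) := by
    apply Set.Subset.antisymm
    · rintro y (⟨h, _⟩ | ⟨h, _⟩) <;> exact h
    · intro y hy
      rcases hsub hy with h | h
      · exact Or.inl ⟨hy, h⟩
      · exact Or.inr ⟨hy, h⟩
  have key := aux_stmt_6 x U V hUopen hVopen hUV hUVun
  -- density: closure (ι '' U) ∪ closure (ι '' V) = univ
  have hdense : closure (ι '' U) ∪ closure (ι '' V) = Set.univ := by
    rw [← closure_union, ← Set.image_union, hUVun]
    have hXdense : Dense ({x}ᶜ : Set X) := by
      by_contra hnd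
      have h1 : ¬ closure ({x}ᶜ : Set X) = Set.univ := by
        rwa [dense_iff_closure_eq] at hnd
      have h2 : (closure ({x}ᶜ : Set X))ᶜ ⊆ {x} := by
        rw [Set.compl_subset_comm]
        exact subset_closure.trans' (by simp)
      have h3 : (closure ({x}ᶜ : Set X))ᶜ.Nonempty := by
        rw [Set.nonempty_compl]; exact h1
      have h4 : (closure ({x}ᶜ : Set X))ᶜ = {x} := by
        obtain ⟨z, hz⟩ := h3
        have := h2 hz
        simp only [Set.mem_singleton_iff] at this
        subst this
        exact Set.Subset.antisymm h2 (by simpa [Set.singleton_subset_iff] using hz)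
      have hopen : IsOpen ({x} : Set X) := h4 ▸ isClosed_closure.isOpen_compl
      have hclopen : IsClopen ({x} : Set X) := ⟨isClosed_singleton, hopen⟩
      have huniv : ({x} : Set X) = Set.univ :=
        hclopen.eq_univ ⟨x, rfl⟩
      obtain ⟨y, hy⟩ := hneu
      have : y ∈ ({x} : Set X) := huniv ▸ Set.mem_univ y
      exact hy.1 this
    have : Dense (ι '' ({x}ᶜ : Set X)) :=
      DenseRange.dense_image denseRange_stoneCechUnit continuous_stoneCechUnit hXdense
    rwa [dense_iff_closure_eq] at this
  intro hpc
  obtain ⟨y, hyx, hyu⟩ := hneu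
  obtain ⟨z, hzx, hzv⟩ := hnev
  have hyU : y ∈ U := ⟨hyx, hyu⟩
  have hzV : z ∈ V := ⟨hzx, hzv⟩
  have hyne : ι y ≠ ι x := fun h => hyx (injective_stoneCechUnit_of_t35Space h)
  have hzne : ι z ≠ ι x := fun h => hzx (injective_stoneCechUnit_of_t35Space h)
  have hres := hpc (closure (ι '' V))ᶜ (closure (ι '' U))ᶜ
    isClosed_closure.isOpen_compl isClosed_closure.isOpen_compl
    (by
      intro p hp
      by_cases h1 : p ∈ closure (ι '' V)
      · by_cases h2 : p ∈ closure (ι '' U)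
        · exact absurd ⟨h2, h1⟩ (key p hp)
        · exact Or.inr h2
      · exact Or.inl h1)
    ⟨ι y, hyne, fun h => key (ι y) hyne ⟨subset_closure ⟨y, hyU, rfl⟩, h⟩⟩
    ⟨ι z, hzne, fun h => key (ι z) hzne ⟨h, subset_closure ⟨z, hzV, rfl⟩⟩⟩
  obtain ⟨p, _, hp1, hp2⟩ := hres
  have : p ∈ closure (ι '' U) ∪ closure (ι '' V) := hdense ▸ Set.mem_univ p
  rcases this with h | h
  · exact hp2 h
  · exact hp1 h
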